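/- For every n ∈ ℕ, the n-th power of the operator X_s = y∂_q + i x q equals the sum over j = 0,…,⌊n/2⌋ and k = 0,…,n−2j of A(n,j,k) · y^{n−j−k} (ix)^{j+k} q^k ∂_q^{n−2j−k}, where the coefficients A(n,j,k) are defined by the recursion A(n,j,k) = A(n−1,j,k) + A(n−1,j,k−1) + (k+1)·A(n−1,j−1,k+1) with A(0,0,0) = 1 and A(n,j,k) = 0 outside the range 0 ≤ j ≤ ⌊n/2⌋, 0 ≤ k ≤ n−2j. -/

import Mathlib

noncomputable section

def pq (f : ℝ → ℝ → ℝ → ℂ) : ℝ → ℝ → ℝ → ℂ := fun x y q => deriv (fun t => f x y t) q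

def Smooth3 (f : ℝ → ℝ → ℝ → ℂ) : Prop :=
  ContDiff ℝ ⊤ (fun p : ℝ × ℝ × ℝ => f p.1 p.2.1 p.2.2)

/-- X_s = y ∂_q + i x q -/
def Xs (f : ℝ → ℝ → ℝ → ℂ) : ℝ → ℝ → ℝ → ℂ :=
  fun x y q => (y : ℂ) * pq f x y q + Complex.I * x * q * f x y q

/-- The coefficients A(n,j,k), defined by the 4-term recursion
`A(n,j,k) = A(n−1,j,k) + A(n−1,j,k−1) + (k+1)·A(n−1,j−1,k+1)` with `A(0,0,0)=1`
and vanishing outside the range `0 ≤ j ≤ ⌊n/2⌋`, `0 ≤ k ≤ n−2j`. -/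
def Acoef : ℕ → ℤ → ℤ → ℤ
  | 0, j, k => if j = 0 ∧ k = 0 then 1 else 0
  | (n + 1), j, k =>
    if 0 ≤ j ∧ j ≤ ((n : ℤ) + 1) / 2 ∧ 0 ≤ k ∧ k ≤ (n : ℤ) + 1 - 2 * j then
      Acoef n j k + Acoef n j (k - 1) + (k + 1) * Acoef n (j - 1) (k + 1)
    else 0

open Finset

lemma Acoef_eq_zero {n : ℕ} {j k : ℤ} (h : j < 0 ∨ k < 0 ∨ (n : ℤ) < 2 * j + k) :
    Acoef n j k = 0 := by
  cases n with
  | zero =>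
    simp only [Acoef]
    split
    · next hc => omega
    · rfl
  | succ n =>
    simp only [Acoef]
    split
    · next hc => omega
    · rfl

lemma Acoef_rec (n : ℕ) (j k : ℤ) (hj : 0 ≤ j) (hk : 0 ≤ k) :
    Acoef (n + 1) j k =
      Acoef n j k + Acoef n j (k - 1) + (k + 1) * Acoef n (j - 1) (k + 1) := by
  show (if 0 ≤ j ∧ j ≤ ((n : ℤ) + 1) / 2 ∧ 0 ≤ k ∧ k ≤ (n : ℤ) + 1 - 2 * j then
      Acoef n j k + Acoef n j (k - 1) + (k + 1) * Acoef n (j - 1) (k + 1)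
    else 0) = _
  split
  · rfl
  · next hc =>
    push_neg at hc
    have h1 : Acoef n j k = 0 := Acoef_eq_zero (by omega)
    have h2 : Acoef n j (k - 1) = 0 := Acoef_eq_zero (by omega)
    have h3 : Acoef n (j - 1) (k + 1) = 0 := Acoef_eq_zero (by omega)
    rw [h1, h2, h3]; ring

/-- The 1-dimensional operator `h ↦ a h' + b t h`. -/
def TopOp (a b : ℂ) (h : ℝ → ℂ) : ℝ → ℂ := fun t => a * deriv h t + b * t * h t

lemma hDm (g : ℝ → ℂ) (hg : ContDiff ℝ ⊤ g) (m : ℕ) (q : ℝ) :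
    HasDerivAt (deriv^[m] g) (deriv^[m + 1] g q) q := by
  have h1 : Differentiable ℝ (deriv^[m] g) :=
    ((hg.of_le le_top).iterate_deriv m).differentiable (by simp)
  have h2 := (h1 q).hasDerivAt
  rwa [show deriv^[m + 1] g = deriv (deriv^[m] g) from Function.iterate_succ_apply' _ _ _]

lemma hPow (k : ℕ) (q : ℝ) :
    HasDerivAt (fun t : ℝ => (t : ℂ) ^ k) ((k : ℂ) * (q : ℂ) ^ (k - 1)) q := by
  have h := (hasDerivAt_pow k q).ofReal_comp
  have he : (fun t : ℝ => ((t ^ k : ℝ) : ℂ)) = fun t : ℝ => (t : ℂ) ^ k := by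
    funext t; push_cast; ring
  rw [he] at h
  convert h using 1
  push_cast; ring

lemma shrink (n : ℕ) (F : ℕ → ℕ → ℂ)
    (h : ∀ j k, j ≤ n + 1 → k ≤ n + 1 → (j = n + 1 ∨ k = n + 1) → F j k = 0) :
    ∑ j ∈ range (n + 1 + 1), ∑ k ∈ range (n + 1 + 1), F j k
      = ∑ j ∈ range (n + 1), ∑ k ∈ range (n + 1), F j k := by
  rw [Finset.sum_range_succ,
    show (∑ k ∈ range (n + 1 + 1), F (n + 1) k) = 0 from
      Finset.sum_eq_zero fun k hk =>
        h _ _ le_rfl (by simpa using Nat.lt_succ_iff.mp (mem_range.mp hk)) (Or.inl rfl),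
    add_zero]
  exact Finset.sum_congr rfl fun j hj => by
    rw [Finset.sum_range_succ, h j (n + 1)
      (Nat.lt_succ_iff.mp (Nat.lt_succ_of_lt (mem_range.mp hj))) le_rfl (Or.inr rfl), add_zero]

lemma key (a b : ℂ) (g : ℝ → ℂ) (hg : ContDiff ℝ ⊤ g) (n : ℕ) :
    (TopOp a b)^[n] g = fun q : ℝ =>
      ∑ j ∈ range (n + 1), ∑ k ∈ range (n + 1),
        (Acoef n j k : ℂ) * a ^ (n - j - k) * b ^ (j + k) * (q : ℂ) ^ k *
          deriv^[n - 2 * j - k] g q := by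
  induction n with
  | zero =>
    funext q
    simp [Acoef]
  | succ n ih =>
    funext q
    rw [Function.iterate_succ_apply', ih]
    have hder : deriv (fun t : ℝ => ∑ j ∈ range (n + 1), ∑ k ∈ range (n + 1),
        (Acoef n j k : ℂ) * a ^ (n - j - k) * b ^ (j + k) * (t : ℂ) ^ k *
          deriv^[n - 2 * j - k] g t) q
      = ∑ j ∈ range (n + 1), ∑ k ∈ range (n + 1),
        (Acoef n j k : ℂ) * a ^ (n - j - k) * b ^ (j + k) *
          ((k : ℂ) * (q : ℂ) ^ (k - 1) * deriv^[n - 2 * j - k] g q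
            + (q : ℂ) ^ k * deriv^[n - 2 * j - k + 1] g q) := by
      apply HasDerivAt.deriv
      apply HasDerivAt.fun_sum
      intro j _
      apply HasDerivAt.fun_sum
      intro k _
      have h := ((hPow k q).mul (hDm g hg (n - 2 * j - k) q)).const_mul
        ((Acoef n j k : ℂ) * a ^ (n - j - k) * b ^ (j + k))
      simpa [mul_assoc] using h
    simp only [TopOp]
    rw [hder]
    have hL : a * (∑ j ∈ range (n + 1), ∑ k ∈ range (n + 1),
          (Acoef n j k : ℂ) * a ^ (n - j - k) * b ^ (j + k) *
            ((k : ℂ) * (q : ℂ) ^ (k - 1) * deriv^[n - 2 * j - k] g q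
              + (q : ℂ) ^ k * deriv^[n - 2 * j - k + 1] g q))
        + b * q * (∑ j ∈ range (n + 1), ∑ k ∈ range (n + 1),
          (Acoef n j k : ℂ) * a ^ (n - j - k) * b ^ (j + k) * (q : ℂ) ^ k *
            deriv^[n - 2 * j - k] g q)
      = (∑ j ∈ range (n + 1), ∑ k ∈ range (n + 1),
          (Acoef n j k : ℂ) * a ^ (n - j - k + 1) * b ^ (j + k) * (q : ℂ) ^ k *
            deriv^[n - 2 * j - k + 1] g q)
        + (∑ j ∈ range (n + 1), ∑ k ∈ range (n + 1),
          (Acoef n j k : ℂ) * a ^ (n - j - k) * b ^ (j + k + 1) * (q : ℂ) ^ (k + 1) *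
            deriv^[n - 2 * j - k] g q)
        + (∑ j ∈ range (n + 1), ∑ k ∈ range (n + 1),
          (k : ℂ) * (Acoef n j k : ℂ) * a ^ (n - j - k + 1) * b ^ (j + k) * (q : ℂ) ^ (k - 1) *
            deriv^[n - 2 * j - k] g q) := by
      rw [Finset.mul_sum, Finset.mul_sum, ← Finset.sum_add_distrib,
        ← Finset.sum_add_distrib, ← Finset.sum_add_distrib]
      refine Finset.sum_congr rfl fun j _ => ?_
      rw [Finset.mul_sum, Finset.mul_sum, ← Finset.sum_add_distrib,
        ← Finset.sum_add_distrib, ← Finset.sum_add_distrib]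
      refine Finset.sum_congr rfl fun k _ => ?_
      ring
    rw [hL]
    have hRexp :
        (∑ j ∈ range (n + 1 + 1), ∑ k ∈ range (n + 1 + 1),
          (Acoef (n + 1) j k : ℂ) * a ^ (n + 1 - j - k) * b ^ (j + k) * (q : ℂ) ^ k *
            deriv^[n + 1 - 2 * j - k] g q)
        = (∑ j ∈ range (n + 1 + 1), ∑ k ∈ range (n + 1 + 1),
            (Acoef n j k : ℂ) * a ^ (n + 1 - j - k) * b ^ (j + k) * (q : ℂ) ^ k *
              deriv^[n + 1 - 2 * j - k] g q)
          + (∑ j ∈ range (n + 1 + 1), ∑ k ∈ range (n + 1 + 1),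
            (Acoef n j ((k : ℤ) - 1) : ℂ) * a ^ (n + 1 - j - k) * b ^ (j + k) * (q : ℂ) ^ k *
              deriv^[n + 1 - 2 * j - k] g q)
          + (∑ j ∈ range (n + 1 + 1), ∑ k ∈ range (n + 1 + 1),
            ((k : ℂ) + 1) * (Acoef n ((j : ℤ) - 1) ((k : ℤ) + 1) : ℂ) * a ^ (n + 1 - j - k) *
              b ^ (j + k) * (q : ℂ) ^ k * deriv^[n + 1 - 2 * j - k] g q) := by
      rw [← Finset.sum_add_distrib, ← Finset.sum_add_distrib]
      refine Finset.sum_congr rfl fun j _ => ?_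
      rw [← Finset.sum_add_distrib, ← Finset.sum_add_distrib]
      refine Finset.sum_congr rfl fun k _ => ?_
      rw [Acoef_rec n j k (Int.ofNat_nonneg j) (Int.ofNat_nonneg k)]
      push_cast
      ring
    have hR1 :
        (∑ j ∈ range (n + 1 + 1), ∑ k ∈ range (n + 1 + 1),
            (Acoef n j k : ℂ) * a ^ (n + 1 - j - k) * b ^ (j + k) * (q : ℂ) ^ k *
              deriv^[n + 1 - 2 * j - k] g q)
        = ∑ j ∈ range (n + 1), ∑ k ∈ range (n + 1),
            (Acoef n j k : ℂ) * a ^ (n - j - k + 1) * b ^ (j + k) * (q : ℂ) ^ k *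
              deriv^[n - 2 * j - k + 1] g q := by
      refine (shrink n _ ?_).trans ?_
      · intro j k hj hk hor
        have h0 : Acoef n (j : ℤ) (k : ℤ) = 0 := by
          apply Acoef_eq_zero
          rcases hor with h | h <;> subst h <;> right <;> right <;> push_cast <;> omega
        simp [h0]
      · refine Finset.sum_congr rfl fun j hj => Finset.sum_congr rfl fun k hk => ?_
        by_cases h0 : Acoef n (j : ℤ) (k : ℤ) = 0
        · simp [h0]
        · have h1 : ¬((j:ℤ) < 0 ∨ (k:ℤ) < 0 ∨ (n : ℤ) < 2 * j + k) :=
            fun h => h0 (Acoef_eq_zero h)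
          push_neg at h1
          obtain ⟨-, -, hb⟩ := h1
          have hb' : 2 * j + k ≤ n := by exact_mod_cast hb
          rw [show n + 1 - j - k = n - j - k + 1 by omega,
            show n + 1 - 2 * j - k = n - 2 * j - k + 1 by omega]
    have hR2 :
        (∑ j ∈ range (n + 1 + 1), ∑ k ∈ range (n + 1 + 1),
            (Acoef n j ((k : ℤ) - 1) : ℂ) * a ^ (n + 1 - j - k) * b ^ (j + k) * (q : ℂ) ^ k *
              deriv^[n + 1 - 2 * j - k] g q)
        = ∑ j ∈ range (n + 1), ∑ k ∈ range (n + 1),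
            (Acoef n j k : ℂ) * a ^ (n - j - k) * b ^ (j + k + 1) * (q : ℂ) ^ (k + 1) *
              deriv^[n - 2 * j - k] g q := by
      have step1 : ∀ j : ℕ,
          (∑ k ∈ range (n + 1 + 1),
            (Acoef n j ((k : ℤ) - 1) : ℂ) * a ^ (n + 1 - j - k) * b ^ (j + k) * (q : ℂ) ^ k *
              deriv^[n + 1 - 2 * j - k] g q)
          = ∑ k ∈ range (n + 1),
            (Acoef n j ((((k : ℕ) + 1 : ℕ) : ℤ) - 1) : ℂ) * a ^ (n + 1 - j - (k + 1)) *
              b ^ (j + (k + 1)) * (q : ℂ) ^ (k + 1) * deriv^[n + 1 - 2 * j - (k + 1)] g q := by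
        intro j
        rw [Finset.sum_range_succ' _ (n + 1)]
        have h0 : Acoef n (j : ℤ) (-1) = 0 := Acoef_eq_zero (Or.inr (Or.inl (by norm_num)))
        simp [h0]
      calc (∑ j ∈ range (n + 1 + 1), ∑ k ∈ range (n + 1 + 1),
            (Acoef n j ((k : ℤ) - 1) : ℂ) * a ^ (n + 1 - j - k) * b ^ (j + k) * (q : ℂ) ^ k *
              deriv^[n + 1 - 2 * j - k] g q)
          = ∑ j ∈ range (n + 1 + 1), ∑ k ∈ range (n + 1),
              (Acoef n j ((((k : ℕ) + 1 : ℕ) : ℤ) - 1) : ℂ) * a ^ (n + 1 - j - (k + 1)) *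
                b ^ (j + (k + 1)) * (q : ℂ) ^ (k + 1) * deriv^[n + 1 - 2 * j - (k + 1)] g q :=
            Finset.sum_congr rfl fun j _ => step1 j
        _ = ∑ j ∈ range (n + 1), ∑ k ∈ range (n + 1),
              (Acoef n j ((((k : ℕ) + 1 : ℕ) : ℤ) - 1) : ℂ) * a ^ (n + 1 - j - (k + 1)) *
                b ^ (j + (k + 1)) * (q : ℂ) ^ (k + 1) * deriv^[n + 1 - 2 * j - (k + 1)] g q := by
            refine (Finset.sum_subset (Finset.range_subset_range.mpr (by omega)) ?_).symm
            intro j hj hj2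
            have hjn : j = n + 1 := by
              have h1 := Finset.mem_range.mp hj
              have h2 : ¬ j < n + 1 := fun h => hj2 (Finset.mem_range.mpr h)
              omega
            subst hjn
            refine Finset.sum_eq_zero fun k _ => ?_
            have hz : Acoef n ((n + 1 : ℕ) : ℤ) ((((k : ℕ) + 1 : ℕ) : ℤ) - 1) = 0 := by
              apply Acoef_eq_zero; right; right; push_cast; omega
            rw [hz]; push_cast; ring
        _ = _ := by
            refine Finset.sum_congr rfl fun j _ => Finset.sum_congr rfl fun k _ => ?_
            rw [show ((((k : ℕ) + 1 : ℕ) : ℤ) - 1) = (k : ℤ) by push_cast; ring,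
              show n + 1 - j - (k + 1) = n - j - k by omega,
              show j + (k + 1) = j + k + 1 by omega,
              show n + 1 - 2 * j - (k + 1) = n - 2 * j - k by omega]
    have hR3 :
        (∑ j ∈ range (n + 1 + 1), ∑ k ∈ range (n + 1 + 1),
            ((k : ℂ) + 1) * (Acoef n ((j : ℤ) - 1) ((k : ℤ) + 1) : ℂ) * a ^ (n + 1 - j - k) *
              b ^ (j + k) * (q : ℂ) ^ k * deriv^[n + 1 - 2 * j - k] g q)
        = ∑ j ∈ range (n + 1), ∑ k ∈ range (n + 1),
            (k : ℂ) * (Acoef n j k : ℂ) * a ^ (n - j - k + 1) * b ^ (j + k) *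
              (q : ℂ) ^ (k - 1) * deriv^[n - 2 * j - k] g q := by
      rw [Finset.sum_range_succ' _ (n + 1)]
      have hz0 : (∑ k ∈ range (n + 1 + 1),
          ((k : ℂ) + 1) * (Acoef n (((0 : ℕ) : ℤ) - 1) ((k : ℤ) + 1) : ℂ) * a ^ (n + 1 - 0 - k) *
            b ^ (0 + k) * (q : ℂ) ^ k * deriv^[n + 1 - 2 * 0 - k] g q) = 0 := by
        refine Finset.sum_eq_zero fun k _ => ?_
        have h0 : Acoef n (((0 : ℕ) : ℤ) - 1) ((k : ℤ) + 1) = 0 :=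
          Acoef_eq_zero (Or.inl (by norm_num))
        rw [h0]; push_cast; ring
      rw [hz0, add_zero]
      refine Finset.sum_congr rfl fun j hj => ?_
      have hT : (∑ k ∈ range (n + 1),
            (k : ℂ) * (Acoef n j k : ℂ) * a ^ (n - j - k + 1) * b ^ (j + k) *
              (q : ℂ) ^ (k - 1) * deriv^[n - 2 * j - k] g q)
          = ∑ k ∈ range n,
            ((k + 1 : ℕ) : ℂ) * (Acoef n j ((k + 1 : ℕ) : ℤ) : ℂ) * a ^ (n - j - (k + 1) + 1) *
              b ^ (j + (k + 1)) * (q : ℂ) ^ ((k + 1) - 1) *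
              deriv^[n - 2 * j - (k + 1)] g q := by
        rw [Finset.sum_range_succ' _ n]
        norm_num
      rw [hT]
      have hshr : (∑ k ∈ range (n + 1 + 1),
            ((k : ℂ) + 1) * (Acoef n (((j + 1 : ℕ) : ℤ) - 1) ((k : ℤ) + 1) : ℂ) *
              a ^ (n + 1 - (j + 1) - k) * b ^ ((j + 1) + k) * (q : ℂ) ^ k *
              deriv^[n + 1 - 2 * (j + 1) - k] g q)
          = ∑ k ∈ range n,
            ((k : ℂ) + 1) * (Acoef n (((j + 1 : ℕ) : ℤ) - 1) ((k : ℤ) + 1) : ℂ) *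
              a ^ (n + 1 - (j + 1) - k) * b ^ ((j + 1) + k) * (q : ℂ) ^ k *
              deriv^[n + 1 - 2 * (j + 1) - k] g q := by
        refine (Finset.sum_subset (Finset.range_subset_range.mpr (by omega)) ?_).symm
        intro k hk hk2
        have hkn : n ≤ k := by
          have h2 : ¬ k < n := fun h => hk2 (Finset.mem_range.mpr h); omega
        have hz : Acoef n (((j + 1 : ℕ) : ℤ) - 1) ((k : ℤ) + 1) = 0 := by
          apply Acoef_eq_zero; right; right; push_cast; omega
        rw [hz]; push_cast; ring
      rw [hshr]
      refine Finset.sum_congr rfl fun k hk => ?_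
      rw [show (((j + 1 : ℕ) : ℤ) - 1) = (j : ℤ) by push_cast; ring,
        show ((k : ℤ) + 1) = ((k + 1 : ℕ) : ℤ) by push_cast; ring]
      by_cases h0 : Acoef n (j : ℤ) ((k + 1 : ℕ) : ℤ) = 0
      · rw [h0]; push_cast; ring
      · have h1 : ¬((j:ℤ) < 0 ∨ ((k + 1 : ℕ) : ℤ) < 0 ∨ (n : ℤ) < 2 * j + ((k + 1 : ℕ) : ℤ)) :=
          fun h => h0 (Acoef_eq_zero h)
        push_neg at h1
        obtain ⟨-, -, hb⟩ := h1
        have hb' : 2 * j + (k + 1) ≤ n := by exact_mod_cast hb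
        rw [show n + 1 - (j + 1) - k = n - j - (k + 1) + 1 by omega,
          show (j + 1) + k = j + (k + 1) by omega,
          show n + 1 - 2 * (j + 1) - k = n - 2 * j - (k + 1) by omega,
          show (q:ℂ) ^ k = (q:ℂ) ^ ((k + 1) - 1) by norm_num]
        push_cast; ring
    rw [hRexp, hR1, hR2, hR3]

lemma pq_iter (f : ℝ → ℝ → ℝ → ℂ) (x y : ℝ) :
    ∀ m : ℕ, pq^[m] f x y = deriv^[m] (fun t => f x y t) := by
  intro m
  induction m with
  | zero => rfl
  | succ m ih =>
    rw [Function.iterate_succ_apply', Function.iterate_succ_apply']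
    show pq (pq^[m] f) x y = deriv (deriv^[m] fun t => f x y t)
    funext t
    show deriv (fun s => pq^[m] f x y s) t = _
    rw [show (fun s => pq^[m] f x y s) = pq^[m] f x y from rfl, ih]

lemma Xs_iter (f : ℝ → ℝ → ℝ → ℂ) (x y : ℝ) (n : ℕ) :
    Xs^[n] f x y = (TopOp (y : ℂ) (Complex.I * x))^[n] (fun t => f x y t) := by
  induction n with
  | zero => rfl
  | succ n ih =>
    rw [Function.iterate_succ_apply', Function.iterate_succ_apply']
    funext t
    show (y : ℂ) * pq (Xs^[n] f) x y t + Complex.I * x * t * Xs^[n] f x y t = _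
    rw [show pq (Xs^[n] f) x y t = deriv (fun s => Xs^[n] f x y s) t from rfl,
      show (fun s => Xs^[n] f x y s) = Xs^[n] f x y from rfl, ih]
    rfl

theorem Xs_pow_formula (n : ℕ) (f : ℝ → ℝ → ℝ → ℂ) (hf : Smooth3 f) (x y q : ℝ) :
    Xs^[n] f x y q =
      ∑ j ∈ Finset.range (n / 2 + 1), ∑ k ∈ Finset.range (n - 2 * j + 1),
        (Acoef n j k : ℂ) * (y : ℂ) ^ (n - j - k) * (Complex.I * x) ^ (j + k) *
          (q : ℂ) ^ k * pq^[n - 2 * j - k] f x y q := by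
  have hg : ContDiff ℝ ⊤ (fun t : ℝ => f x y t) := by
    have hc : ContDiff ℝ ⊤ (fun t : ℝ => ((x, y, t) : ℝ × ℝ × ℝ)) :=
      contDiff_const.prodMk (contDiff_const.prodMk contDiff_id)
    exact hf.comp hc
  have hL : Xs^[n] f x y q
      = ∑ j ∈ range (n + 1), ∑ k ∈ range (n + 1),
          (Acoef n j k : ℂ) * (y : ℂ) ^ (n - j - k) * (Complex.I * x) ^ (j + k) *
            (q : ℂ) ^ k * deriv^[n - 2 * j - k] (fun t : ℝ => f x y t) q := by
    rw [Xs_iter f x y n, key (y : ℂ) (Complex.I * x) (fun t : ℝ => f x y t) hg n]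
  rw [hL]
  have hR : ∑ j ∈ Finset.range (n / 2 + 1), ∑ k ∈ Finset.range (n - 2 * j + 1),
        (Acoef n j k : ℂ) * (y : ℂ) ^ (n - j - k) * (Complex.I * x) ^ (j + k) *
          (q : ℂ) ^ k * pq^[n - 2 * j - k] f x y q
      = ∑ j ∈ range (n + 1), ∑ k ∈ range (n + 1),
          (Acoef n j k : ℂ) * (y : ℂ) ^ (n - j - k) * (Complex.I * x) ^ (j + k) *
            (q : ℂ) ^ k * deriv^[n - 2 * j - k] (fun t : ℝ => f x y t) q := by
    simp only [pq_iter f x y]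
    have hinner : ∀ j : ℕ, j ≤ n / 2 →
        (∑ k ∈ Finset.range (n - 2 * j + 1),
          (Acoef n j k : ℂ) * (y : ℂ) ^ (n - j - k) * (Complex.I * x) ^ (j + k) *
            (q : ℂ) ^ k * deriv^[n - 2 * j - k] (fun t : ℝ => f x y t) q)
        = ∑ k ∈ range (n + 1),
          (Acoef n j k : ℂ) * (y : ℂ) ^ (n - j - k) * (Complex.I * x) ^ (j + k) *
            (q : ℂ) ^ k * deriv^[n - 2 * j - k] (fun t : ℝ => f x y t) q := by
      intro j hj
      refine Finset.sum_subset (Finset.range_subset_range.mpr (by omega)) ?_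
      intro k hk hk2
      have h1 : k < n + 1 := Finset.mem_range.mp hk
      have h2 : ¬ k < n - 2 * j + 1 := fun h => hk2 (Finset.mem_range.mpr h)
      have hz : Acoef n (j : ℤ) (k : ℤ) = 0 := by
        apply Acoef_eq_zero; right; right; push_cast; omega
      rw [hz]; push_cast; ring
    calc ∑ j ∈ Finset.range (n / 2 + 1), ∑ k ∈ Finset.range (n - 2 * j + 1),
          (Acoef n j k : ℂ) * (y : ℂ) ^ (n - j - k) * (Complex.I * x) ^ (j + k) *
            (q : ℂ) ^ k * deriv^[n - 2 * j - k] (fun t : ℝ => f x y t) q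
        = ∑ j ∈ Finset.range (n / 2 + 1), ∑ k ∈ range (n + 1),
          (Acoef n j k : ℂ) * (y : ℂ) ^ (n - j - k) * (Complex.I * x) ^ (j + k) *
            (q : ℂ) ^ k * deriv^[n - 2 * j - k] (fun t : ℝ => f x y t) q :=
        Finset.sum_congr rfl fun j hj =>
          hinner j (Nat.lt_succ_iff.mp (Finset.mem_range.mp hj))
      _ = ∑ j ∈ range (n + 1), ∑ k ∈ range (n + 1),
          (Acoef n j k : ℂ) * (y : ℂ) ^ (n - j - k) * (Complex.I * x) ^ (j + k) *
            (q : ℂ) ^ k * deriv^[n - 2 * j - k] (fun t : ℝ => f x y t) q := by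
        refine Finset.sum_subset (Finset.range_subset_range.mpr (by omega)) ?_
        intro j hj hj2
        have h1 : j < n + 1 := Finset.mem_range.mp hj
        have h2 : ¬ j < n / 2 + 1 := fun h => hj2 (Finset.mem_range.mpr h)
        refine Finset.sum_eq_zero fun k _ => ?_
        have hz : Acoef n (j : ℤ) (k : ℤ) = 0 := by
          apply Acoef_eq_zero; right; right; push_cast; omega
        rw [hz]; push_cast; ring
  rw [hR]
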